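/- If a real number α has the property that for every sufficiently large real Q there exist integers p, q with 1 ≤ q ≤ Q and |α − p/q| ≤ 1/(2qQ), then α is rational. -/

import Mathlib

set_option maxHeartbeats 1600000 in
/-- If for every sufficiently large real Q there are integers p, q with
1 ≤ q ≤ Q and |α − p/q| ≤ 1/(2qQ), then α is rational. -/
theorem rational_of_improved_dirichlet
    (α : ℝ)
    (h : ∃ Q₀ : ℝ, ∀ Q : ℝ, Q₀ ≤ Q → ∃ p q : ℤ,
      1 ≤ q ∧ (q : ℝ) ≤ Q ∧ |α - (p : ℝ) / (q : ℝ)| ≤ 1 / (2 * (q : ℝ) * Q)) :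
    ∃ r : ℚ, α = (r : ℝ) := by
  obtain ⟨Q₀, h⟩ := h
  -- Reduced-fraction version of the hypothesis (denominators cleared).
  have h' : ∀ Q : ℝ, max Q₀ 1 ≤ Q →
      ∃ r : ℚ, (r.den : ℝ) ≤ Q ∧ |α - (r : ℝ)| * (2 * (r.den : ℝ) * Q) ≤ 1 := by
    intro Q hQ
    have hQ1 : (1:ℝ) ≤ Q := le_trans (le_max_right _ _) hQ
    have hQpos : (0:ℝ) < Q := lt_of_lt_of_le one_pos hQ1
    obtain ⟨p, q, hq1, hqQ, hap⟩ := h Q (le_trans (le_max_left _ _) hQ)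
    have hqpos : (0:ℝ) < (q:ℝ) := by exact_mod_cast lt_of_lt_of_le one_pos hq1
    have hdvd : (((p : ℚ) / (q : ℚ)).den : ℤ) ∣ q := by
      rw [← Rat.divInt_eq_div]; exact Rat.den_dvd p q
    have hle : (((p : ℚ) / (q : ℚ)).den : ℤ) ≤ q := Int.le_of_dvd (by linarith) hdvd
    have hle' : ((((p:ℚ)/(q:ℚ)).den : ℝ)) ≤ (q : ℝ) := by exact_mod_cast hle
    have hdenpos : (0:ℝ) < (((p:ℚ)/(q:ℚ)).den : ℝ) := by
      exact_mod_cast ((p:ℚ)/(q:ℚ)).pos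
    refine ⟨(p : ℚ) / (q : ℚ), le_trans hle' hqQ, ?_⟩
    have hcast : (((p : ℚ) / (q : ℚ) : ℚ) : ℝ) = (p : ℝ) / (q : ℝ) := by push_cast; ring
    rw [hcast]
    have h2 : |α - (p : ℝ) / (q : ℝ)| * (2 * (q:ℝ) * Q) ≤ 1 := by
      rw [le_div_iff₀ (by positivity)] at hap
      linarith
    nlinarith [abs_nonneg (α - (p : ℝ) / (q : ℝ)), hle',
      mul_le_mul_of_nonneg_left hle' (mul_nonneg (abs_nonneg (α - (p : ℝ) / (q : ℝ))) (by positivity : (0:ℝ) ≤ 2 * Q))]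
  -- First application at a half-integer scale Q₁, so that the denominator is < Q₁.
  set Q₁ : ℝ := (⌈max Q₀ 1⌉ : ℤ) + 1/2 with hQ₁def
  have hmQ₁ : max Q₀ 1 ≤ Q₁ := le_trans (Int.le_ceil _) (by rw [hQ₁def]; linarith)
  have hQ₁1 : (1:ℝ) ≤ Q₁ := le_trans (le_max_right _ _) hmQ₁
  have hQ₁pos : (0:ℝ) < Q₁ := lt_of_lt_of_le one_pos hQ₁1
  obtain ⟨r₁, hd₁, e1⟩ := h' Q₁ hmQ₁
  have hd₁pos : (0:ℝ) < (r₁.den : ℝ) := by exact_mod_cast r₁.pos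
  have hd₁lt : (r₁.den : ℝ) < Q₁ := by
    have h2 : ((r₁.den : ℤ) : ℝ) < ((⌈max Q₀ 1⌉ : ℤ) : ℝ) + 1 := by
      push_cast
      rw [hQ₁def] at hd₁
      linarith
    have h3 : (r₁.den : ℤ) < ⌈max Q₀ 1⌉ + 1 := by exact_mod_cast h2
    have h4 : (r₁.den : ℤ) ≤ ⌈max Q₀ 1⌉ := by omega
    have h5 : ((r₁.den : ℤ) : ℝ) ≤ ((⌈max Q₀ 1⌉ : ℤ) : ℝ) := by exact_mod_cast h4
    push_cast at h5
    rw [hQ₁def]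
    linarith
  rcases eq_or_lt_of_le (abs_nonneg (α - (r₁:ℝ))) with h0 | hεpos
  · exact ⟨r₁, sub_eq_zero.mp (abs_eq_zero.mp h0.symm)⟩
  · exfalso
    set ε : ℝ := |α - (r₁ : ℝ)| with hεdef
    set δ : ℝ := (Q₁ - (r₁.den:ℝ)) / (2 * Q₁) with hδdef
    have hδpos : 0 < δ := div_pos (by linarith) (by positivity)
    have hδhalf : δ * (2 * Q₁) = Q₁ - (r₁.den:ℝ) := by
      rw [hδdef]; field_simp
    have hδlt : δ < 1/2 := by nlinarith
    set Q' : ℝ := (1 + δ) / (2 * (r₁.den:ℝ) * ε) with hQ'def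
    have hQ'pos : 0 < Q' := by rw [hQ'def]; positivity
    have hD : Q' * (2 * (r₁.den:ℝ) * ε) = 1 + δ := by
      rw [hQ'def]; field_simp
    have hQ₁Q' : Q₁ ≤ Q' := by
      nlinarith [hεpos, hd₁pos, hδpos]
    obtain ⟨r₂, hd₂, e2⟩ := h' Q' (le_trans hmQ₁ hQ₁Q')
    have hd₂pos : (0:ℝ) < (r₂.den : ℝ) := by exact_mod_cast r₂.pos
    have hne : (r₁ : ℝ) ≠ (r₂ : ℝ) := by
      intro heq
      have hr : r₁ = r₂ := by exact_mod_cast heq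
      subst hr
      rw [← hεdef] at e2
      nlinarith [hεpos, hd₁pos, hδpos, hQ'pos]
    have hcast : ((r₁.num * (r₂.den : ℤ) - r₂.num * (r₁.den : ℤ) : ℤ) : ℝ)
        = ((r₁:ℝ) - (r₂:ℝ)) * (r₁.den:ℝ) * (r₂.den:ℝ) := by
      rw [Rat.cast_def, Rat.cast_def]
      push_cast
      field_simp
    have hn0 : (r₁.num * (r₂.den : ℤ) - r₂.num * (r₁.den : ℤ) : ℤ) ≠ 0 := by
      intro h0
      apply hne
      have hz : ((r₁:ℝ) - (r₂:ℝ)) * (r₁.den:ℝ) * (r₂.den:ℝ) = 0 := by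
        rw [← hcast, h0]; simp
      have hsub : ((r₁:ℝ) - (r₂:ℝ)) = 0 := by
        by_contra hs
        exact (mul_ne_zero (mul_ne_zero hs (ne_of_gt hd₁pos)) (ne_of_gt hd₂pos)) hz
      exact sub_eq_zero.mp hsub
    have h1n : (1:ℝ) ≤ |(r₁:ℝ) - (r₂:ℝ)| * (r₁.den:ℝ) * (r₂.den:ℝ) := by
      have hint : (1:ℤ) ≤ |r₁.num * (r₂.den : ℤ) - r₂.num * (r₁.den : ℤ)| :=
        Int.one_le_abs hn0
      calc (1:ℝ) ≤ |((r₁.num * (r₂.den : ℤ) - r₂.num * (r₁.den : ℤ) : ℤ) : ℝ)| := by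
            exact_mod_cast hint
        _ = |(r₁:ℝ) - (r₂:ℝ)| * (r₁.den:ℝ) * (r₂.den:ℝ) := by
            rw [hcast, abs_mul, abs_mul, abs_of_pos hd₁pos, abs_of_pos hd₂pos]
    have htri : |(r₁:ℝ) - (r₂:ℝ)| ≤ ε + |α - (r₂:ℝ)| := by
      calc |(r₁:ℝ) - (r₂:ℝ)| ≤ |(r₁:ℝ) - α| + |α - (r₂:ℝ)| := abs_sub_le _ _ _
        _ = ε + |α - (r₂:ℝ)| := by rw [abs_sub_comm, ← hεdef]
    -- final contradiction
    clear_value Q₁ ε δ Q'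
    have step1 : 2 * Q' ≤ |(r₁:ℝ) - (r₂:ℝ)| * (r₁.den:ℝ) * (r₂.den:ℝ) * (2 * Q') := by
      have := mul_le_mul_of_nonneg_right h1n (by positivity : (0:ℝ) ≤ 2 * Q')
      linarith
    have step2 : |(r₁:ℝ) - (r₂:ℝ)| * (r₁.den:ℝ) * (r₂.den:ℝ) * (2 * Q')
        ≤ ε * (r₁.den:ℝ) * (r₂.den:ℝ) * (2 * Q')
          + |α - (r₂:ℝ)| * (2 * (r₂.den:ℝ) * Q') * (r₁.den:ℝ) := by
      have t2 := mul_le_mul_of_nonneg_right htri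
        (by positivity : (0:ℝ) ≤ (r₁.den:ℝ) * (r₂.den:ℝ) * (2 * Q'))
      nlinarith [t2]
    have step3 : ε * (r₁.den:ℝ) * (r₂.den:ℝ) * (2 * Q') ≤ (1 + δ) * Q' := by
      have c0 : (0:ℝ) ≤ ε * (r₁.den:ℝ) * (2 * Q') := by positivity
      have t3 := mul_le_mul_of_nonneg_left hd₂ c0
      have t3' : ε * (r₁.den:ℝ) * (2 * Q') * Q' = (1 + δ) * Q' := by
        linear_combination Q' * hD
      nlinarith [t3, t3']
    have step4 : |α - (r₂:ℝ)| * (2 * (r₂.den:ℝ) * Q') * (r₁.den:ℝ) ≤ (r₁.den:ℝ) := by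
      have t4 := mul_le_mul_of_nonneg_right e2 (le_of_lt hd₁pos)
      nlinarith [t4]
    -- hence (1 - δ) Q' ≤ r₁.den, contradicting Q' ≥ Q₁ > r₁.den and δ < 1/2
    have t5 := mul_le_mul_of_nonneg_left hQ₁Q' (by linarith : (0:ℝ) ≤ 1 - δ)
    nlinarith [step1, step2, step3, step4, t5, hδhalf, hd₁lt]
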